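/- arXiv:0707.2149 — 2 statements merged into one kernel-verified Lean document; each statement's English description precedes it below -/
import Mathlib

section
/- Let C, D be elements of an associative algebra with ad_C(D) = CD − DC. Then exp(C) · P₁(−ad_C)(D) = P₁(ad_C)(D) · exp(C), where P₁(x) = ∑_{k=0}^∞ x^k/(k+1)!. (In a Banach algebra, or as formal power series.) -/
open NormedSpace Finset

/-- Alternating sum of binomial coefficients `C(n+1, j+1)` for `j = 0..n` equals `1`. -/
lemma alt_sum_choose (n : ℕ) :
    ∑ j ∈ Finset.range (n + 1), (-1 : ℝ) ^ j * ((n + 1).choose (j + 1) : ℝ) = 1 := by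
  have h : ∑ i ∈ Finset.range (n + 2), (-1 : ℤ) ^ i * ((n + 1).choose i : ℤ) = 0 :=
    Int.alternating_sum_range_choose_of_ne (Nat.succ_ne_zero n)
  rw [Finset.sum_range_succ'] at h
  have e : ∀ i, (-1 : ℤ) ^ (i + 1) * ((n + 1).choose (i + 1) : ℤ)
      = -((-1 : ℤ) ^ i * ((n + 1).choose (i + 1) : ℤ)) := fun i => by ring
  rw [Finset.sum_congr rfl (fun i _ => e i), Finset.sum_neg_distrib] at h
  simp only [pow_zero, one_mul, Nat.choose_zero_right, Nat.cast_one] at h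
  have h'' : ∑ j ∈ Finset.range (n + 1), (-1 : ℤ) ^ j * ((n + 1).choose (j + 1) : ℤ) = 1 := by
    linarith
  have := congrArg (Int.cast : ℤ → ℝ) h''
  push_cast at this
  exact this

/-- The key coefficient identity: `∑_{j=0}^{n} (-1)^j / ((j+1)! (n-j)!) = 1/(n+1)!`. -/
lemma coeff_aux (n : ℕ) :
    ∑ j ∈ Finset.range (n + 1),
      (-1 : ℝ) ^ j * (((j + 1).factorial : ℝ))⁻¹ * (((n - j).factorial : ℝ))⁻¹
      = (((n + 1).factorial : ℝ))⁻¹ := by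
  have key : ∀ j ∈ Finset.range (n + 1),
      (-1 : ℝ) ^ j * (((j + 1).factorial : ℝ))⁻¹ * (((n - j).factorial : ℝ))⁻¹
      = ((-1 : ℝ) ^ j * ((n + 1).choose (j + 1) : ℝ)) * (((n + 1).factorial : ℝ))⁻¹ := by
    intro j hj
    rw [Finset.mem_range] at hj
    have hjn : j + 1 ≤ n + 1 := hj
    have hch : ((n + 1).choose (j + 1) : ℝ)
        = ((n + 1).factorial : ℝ)
          / (((j + 1).factorial : ℝ) * (((n + 1) - (j + 1)).factorial : ℝ)) := by
      rw [Nat.cast_choose ℝ hjn]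
    have hs : (n + 1) - (j + 1) = n - j := by omega
    rw [hs] at hch
    rw [hch]
    have h1 : ((j + 1).factorial : ℝ) ≠ 0 := Nat.cast_ne_zero.mpr (Nat.factorial_ne_zero _)
    have h2 : ((n - j).factorial : ℝ) ≠ 0 := Nat.cast_ne_zero.mpr (Nat.factorial_ne_zero _)
    have h3 : ((n + 1).factorial : ℝ) ≠ 0 := Nat.cast_ne_zero.mpr (Nat.factorial_ne_zero _)
    field_simp
  rw [Finset.sum_congr rfl key, ← Finset.sum_mul, alt_sum_choose, one_mul]

section BanachAlg

variable {B : Type*} [NormedRing B] [NormedAlgebra ℝ B] [CompleteSpace B]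

lemma P1_norm_summable (x : B) :
    Summable fun k : ℕ => ‖(((k + 1).factorial : ℝ))⁻¹ • x ^ k‖ := by
  refine Summable.of_nonneg_of_le (fun k => norm_nonneg _) (fun k => ?_)
    (NormedSpace.norm_expSeries_summable' (𝕂 := ℝ) x)
  rw [norm_smul, norm_smul]
  apply mul_le_mul_of_nonneg_right _ (norm_nonneg _)
  rw [Real.norm_eq_abs, Real.norm_eq_abs, abs_of_nonneg (by positivity),
    abs_of_nonneg (by positivity)]
  apply inv_anti₀ (by positivity)
  exact_mod_cast Nat.factorial_le (Nat.le_succ k)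

lemma P1_summable (x : B) :
    Summable fun k : ℕ => (((k + 1).factorial : ℝ))⁻¹ • x ^ k :=
  (P1_norm_summable x).of_norm

/-- The key one-variable identity: `exp(x) · P₁(-x) = P₁(x)`. -/
lemma exp_mul_P1_neg (x : B) :
    NormedSpace.exp x * (∑' k : ℕ, (((k + 1).factorial : ℝ))⁻¹ • (-x) ^ k)
      = ∑' k : ℕ, (((k + 1).factorial : ℝ))⁻¹ • x ^ k := by
  rw [NormedSpace.exp_eq_tsum ℝ]
  rw [tsum_mul_tsum_eq_tsum_sum_antidiagonal_of_summable_norm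
    (NormedSpace.norm_expSeries_summable' x) (P1_norm_summable (-x))]
  refine tsum_congr fun n => ?_
  rw [Finset.Nat.sum_antidiagonal_eq_sum_range_succ_mk]
  have hterm : ∀ j ∈ Finset.range (n + 1),
      (((j.factorial : ℝ))⁻¹ • x ^ j) * ((((n - j + 1).factorial : ℝ))⁻¹ • (-x) ^ (n - j))
      = ((-1 : ℝ) ^ (n - j) * (((n - j + 1).factorial : ℝ))⁻¹ * ((j.factorial : ℝ))⁻¹) • x ^ n := by
    intro j hj
    rw [Finset.mem_range] at hj
    have hx : (-x) ^ (n - j) = (-1 : ℝ) ^ (n - j) • x ^ (n - j) := by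
      rw [← neg_one_smul ℝ x, smul_pow]
    rw [hx, smul_smul, smul_mul_smul_comm, ← pow_add]
    have hjn : j + (n - j) = n := by omega
    rw [hjn]
    congr 1
    ring
  rw [Finset.sum_congr rfl hterm, ← Finset.sum_smul]
  congr 1
  have hc := coeff_aux n
  rw [← Finset.sum_range_reflect] at hc
  rw [← hc]
  refine Finset.sum_congr rfl fun j hj => ?_
  rw [Finset.mem_range] at hj
  have h1 : n + 1 - 1 - j = n - j := by omega
  have h2 : n - (n - j) = j := by omega
  rw [h1, h2]

end BanachAlg

/-- Evaluating a `tsum` of continuous linear maps pointwise. -/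
lemma clm_tsum_apply {A : Type*} [NormedRing A] [NormedAlgebra ℝ A] [CompleteSpace A]
    {f : ℕ → A →L[ℝ] A} (hf : Summable f) (y : A) :
    (∑' n, f n) y = ∑' n, f n y := by
  simpa using ((ContinuousLinearMap.apply ℝ A y).map_tsum hf)

/-- In a Banach algebra, `exp(C) · P₁(−ad_C)(D) = P₁(ad_C)(D) · exp(C)`,
where `P₁(x) = ∑_{k≥0} x^k/(k+1)!` and `ad_C(X) = CX − XC`. -/
theorem stmt1 {A : Type*} [NormedRing A] [NormedAlgebra ℝ A] [CompleteSpace A] (C D : A) :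
    NormedSpace.exp C *
      (∑' k : ℕ, (((k + 1).factorial : ℝ))⁻¹ • ((fun X => -(C * X - X * C))^[k] D)) =
    (∑' k : ℕ, (((k + 1).factorial : ℝ))⁻¹ • ((fun X => C * X - X * C)^[k] D)) *
      NormedSpace.exp C := by
  set L : A →L[ℝ] A := ContinuousLinearMap.mul ℝ A C with hL
  set R : A →L[ℝ] A := (ContinuousLinearMap.mul ℝ A).flip C with hR
  -- basic applications
  have hLapp : ∀ y : A, L y = C * y := fun y => rfl
  have hRapp : ∀ y : A, R y = y * C := fun y => rfl
  -- powers of operators applied pointwise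
  have hadpow : ∀ (k : ℕ) (y : A), ((L - R) ^ k) y = (fun X => C * X - X * C)^[k] y := by
    intro k
    induction k with
    | zero =>
      intro y
      simp only [pow_zero, Function.iterate_zero, id_eq, ContinuousLinearMap.one_apply]
    | succ k ih =>
      intro y
      rw [pow_succ', ContinuousLinearMap.mul_apply, Function.iterate_succ_apply', ih y]
      simp [ContinuousLinearMap.sub_apply, hLapp, hRapp]
  have hadpow' : ∀ (k : ℕ) (y : A), ((-(L - R)) ^ k) y = (fun X => -(C * X - X * C))^[k] y := by
    intro k
    induction k with
    | zero =>
      intro y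
      simp only [pow_zero, Function.iterate_zero, id_eq, ContinuousLinearMap.one_apply]
    | succ k ih =>
      intro y
      rw [pow_succ', ContinuousLinearMap.mul_apply, Function.iterate_succ_apply', ih y]
      simp [ContinuousLinearMap.sub_apply, ContinuousLinearMap.neg_apply, hLapp, hRapp]
  -- commutation
  have hRL : Commute R L := by
    apply ContinuousLinearMap.ext
    intro y
    show R (L y) = L (R y)
    rw [hLapp, hRapp, hLapp, hRapp, mul_assoc]
  have hRx : Commute R (L - R) := hRL.sub_right (Commute.refl R)
  -- exp L = exp R * exp (L - R)
  have hsplit : NormedSpace.exp L = NormedSpace.exp R * NormedSpace.exp (L - R) := by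
    let +nondep : NormedAlgebra ℚ (A →L[ℝ] A) := .restrictScalars ℚ ℝ (A →L[ℝ] A)
    rw [← NormedSpace.exp_add_of_commute hRx, add_sub_cancel]
  -- key operator identity
  have hkey : NormedSpace.exp L * (∑' k : ℕ, (((k + 1).factorial : ℝ))⁻¹ • (-(L - R)) ^ k)
      = NormedSpace.exp R * (∑' k : ℕ, (((k + 1).factorial : ℝ))⁻¹ • (L - R) ^ k) := by
    rw [hsplit, mul_assoc, exp_mul_P1_neg (L - R)]
  -- evaluate both sides at D
  have happ := congrArg (fun T : A →L[ℝ] A => T D) hkey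
  simp only [ContinuousLinearMap.mul_apply] at happ
  -- evaluate exp of L and R
  have hexpL : ∀ y : A, NormedSpace.exp L y = NormedSpace.exp C * y := by
    intro y
    simp only [NormedSpace.exp_eq_tsum ℝ]
    rw [clm_tsum_apply (NormedSpace.expSeries_summable' (𝕂 := ℝ) L) y]
    rw [← Summable.tsum_mul_right y (NormedSpace.expSeries_summable' (𝕂 := ℝ) C)]
    refine tsum_congr fun n => ?_
    have hLn : (L ^ n) y = C ^ n * y := by
      induction n with
      | zero => simp
      | succ n ih =>
        rw [pow_succ', ContinuousLinearMap.mul_apply, ih, hLapp, pow_succ', mul_assoc]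
    simp [ContinuousLinearMap.apply_apply, ContinuousLinearMap.smul_apply, hLn,
      smul_mul_assoc]
  have hexpR : ∀ y : A, NormedSpace.exp R y = y * NormedSpace.exp C := by
    intro y
    simp only [NormedSpace.exp_eq_tsum ℝ]
    rw [clm_tsum_apply (NormedSpace.expSeries_summable' (𝕂 := ℝ) R) y]
    rw [← Summable.tsum_mul_left y (NormedSpace.expSeries_summable' (𝕂 := ℝ) C)]
    refine tsum_congr fun n => ?_
    have hRn : (R ^ n) y = y * C ^ n := by
      induction n with
      | zero => simp
      | succ n ih =>
        rw [pow_succ', ContinuousLinearMap.mul_apply, ih, hRapp, pow_succ]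
        rw [mul_assoc]
    simp [ContinuousLinearMap.apply_apply, ContinuousLinearMap.smul_apply, hRn,
      mul_smul_comm]
  -- evaluate the P₁ series
  have hP1 : (∑' k : ℕ, (((k + 1).factorial : ℝ))⁻¹ • (L - R) ^ k) D
      = ∑' k : ℕ, (((k + 1).factorial : ℝ))⁻¹ • ((fun X => C * X - X * C)^[k] D) := by
    rw [clm_tsum_apply (P1_summable (L - R)) D]
    refine tsum_congr fun k => ?_
    simp [ContinuousLinearMap.apply_apply, ContinuousLinearMap.smul_apply, hadpow k D]
  have hP1' : (∑' k : ℕ, (((k + 1).factorial : ℝ))⁻¹ • (-(L - R)) ^ k) D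
      = ∑' k : ℕ, (((k + 1).factorial : ℝ))⁻¹ • ((fun X => -(C * X - X * C))^[k] D) := by
    rw [clm_tsum_apply (P1_summable (-(L - R))) D]
    refine tsum_congr fun k => ?_
    rw [ContinuousLinearMap.smul_apply, hadpow' k D]
  rw [hexpL, hexpR, hP1, hP1'] at happ
  exact happ
end

section
/- For complex x, P₂(x,0) = (1 − e^x + x e^x)/x² and P₂(0,x) = (−1 + e^x − x)/x² (for x ≠ 0), where P₂(x₁,x₂) = ∑_{n₁,n₂ ≥ 0} x₁^{n₁}(x₁+x₂)^{n₂}/(n₁+n₂+2)!. -/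
open Finset

lemma fact_aux (a b : ℕ) : a.factorial * b.factorial ≤ (a + b + 2).factorial :=
  le_trans (Nat.le_of_dvd (a + b).factorial_pos
    (Nat.factorial_mul_factorial_dvd_factorial_add a b)) (Nat.factorial_le (by omega))

lemma summableP (y z : ℂ) :
    Summable (fun p : ℕ × ℕ => (((p.1 + p.2 + 2).factorial : ℂ))⁻¹ * (y ^ p.1 * z ^ p.2)) := by
  apply Summable.of_norm
  have hb : Summable (fun p : ℕ × ℕ =>
      (‖y‖ ^ p.1 / p.1.factorial) * (‖z‖ ^ p.2 / p.2.factorial)) :=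
    (Real.summable_pow_div_factorial ‖y‖).mul_of_nonneg (Real.summable_pow_div_factorial ‖z‖)
      (fun n => by positivity) (fun n => by positivity)
  refine hb.of_nonneg_of_le (fun p => norm_nonneg _) fun p => ?_
  rw [norm_mul, norm_inv, Complex.norm_natCast, norm_mul, norm_pow, norm_pow]
  calc (((p.1 + p.2 + 2).factorial : ℝ))⁻¹ * (‖y‖ ^ p.1 * ‖z‖ ^ p.2)
      = (‖y‖ ^ p.1 * ‖z‖ ^ p.2) / ((p.1 + p.2 + 2).factorial : ℝ) := by
        rw [div_eq_mul_inv, mul_comm]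
    _ ≤ (‖y‖ ^ p.1 * ‖z‖ ^ p.2) / ((p.1.factorial * p.2.factorial : ℕ) : ℝ) := by
        gcongr
        exact_mod_cast fact_aux p.1 p.2
    _ = ‖y‖ ^ p.1 / p.1.factorial * (‖z‖ ^ p.2 / p.2.factorial) := by push_cast; ring

lemma tsum_prod_eq (f : ℕ × ℕ → ℂ) (hf : Summable f) :
    ∑' p : ℕ × ℕ, f p = ∑' n : ℕ, ∑ kl ∈ Finset.HasAntidiagonal.antidiagonal n, f kl := by
  conv_rhs => congr; ext n; rw [← Finset.sum_finset_coe, ← tsum_fintype (L := .unconditional _)]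
  rw [← Finset.HasAntidiagonal.sigmaAntidiagonalEquivProd.tsum_eq f]
  exact Summable.tsum_sigma' (fun n => (hasSum_fintype _).summable)
    (Finset.HasAntidiagonal.sigmaAntidiagonalEquivProd.summable_iff.mpr hf)

lemma summable_shift (x : ℂ) (k : ℕ) :
    Summable (fun n : ℕ => (((n + k).factorial : ℂ))⁻¹ * x ^ n) := by
  apply Summable.of_norm
  refine (Real.summable_pow_div_factorial ‖x‖).of_nonneg_of_le (fun n => norm_nonneg _) fun n => ?_
  rw [norm_mul, norm_inv, Complex.norm_natCast, norm_pow]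
  calc (((n + k).factorial : ℝ))⁻¹ * ‖x‖ ^ n = ‖x‖ ^ n / ((n + k).factorial : ℝ) := by
        rw [div_eq_mul_inv, mul_comm]
    _ ≤ ‖x‖ ^ n / (n.factorial : ℝ) := by
        gcongr
        omega

lemma exp_tsum (x : ℂ) : Complex.exp x = ∑' n : ℕ, ((n.factorial : ℂ))⁻¹ * x ^ n := by
  rw [Complex.exp_eq_exp_ℂ, NormedSpace.exp_eq_tsum ℂ]
  simp [smul_eq_mul]

/-- `P₂(x₁,x₂) = ∑_{n₁,n₂ ≥ 0} x₁^{n₁}(x₁+x₂)^{n₂}/(n₁+n₂+2)!`. -/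
noncomputable def P2 (x₁ x₂ : ℂ) : ℂ :=
  ∑' n : ℕ × ℕ, (((n.1 + n.2 + 2).factorial : ℂ))⁻¹ * (x₁ ^ n.1 * (x₁ + x₂) ^ n.2)

/-- For `x ≠ 0`, `P₂(x,0) = (1 − e^x + x e^x)/x²` and `P₂(0,x) = (−1 + e^x − x)/x²`. -/
theorem stmt5 (x : ℂ) (hx : x ≠ 0) :
    P2 x 0 = (1 - Complex.exp x + x * Complex.exp x) / x ^ 2 ∧
    P2 0 x = (-1 + Complex.exp x - x) / x ^ 2 := by
  set S1 : ℂ := ∑' n : ℕ, (((n + 1).factorial : ℂ))⁻¹ * x ^ n with hS1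
  set S2 : ℂ := ∑' n : ℕ, (((n + 2).factorial : ℂ))⁻¹ * x ^ n with hS2
  have hsum0 : Summable (fun n : ℕ => ((n.factorial : ℂ))⁻¹ * x ^ n) := by
    simpa using summable_shift x 0
  have h1 : Complex.exp x = 1 + x * S1 := by
    rw [exp_tsum x, Summable.tsum_eq_zero_add hsum0]
    congr 1
    · simp
    · rw [← tsum_mul_left]
      exact tsum_congr fun n => by rw [pow_succ]; ring
  have h2 : S1 = 1 + x * S2 := by
    rw [hS1, Summable.tsum_eq_zero_add (summable_shift x 1)]
    congr 1
    · simp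
    · rw [← tsum_mul_left]
      exact tsum_congr fun n => by
        have : n + 1 + 1 = n + 2 := by omega
        rw [this, pow_succ]; ring
  constructor
  · have hP : P2 x 0 = ∑' n : ℕ, ((n : ℂ) + 1) * ((((n + 2).factorial : ℂ))⁻¹ * x ^ n) := by
      unfold P2
      simp only [add_zero]
      rw [tsum_prod_eq _ (summableP x x)]
      refine tsum_congr fun n => ?_
      have inner : ∀ kl ∈ Finset.HasAntidiagonal.antidiagonal n,
          (((kl.1 + kl.2 + 2).factorial : ℂ))⁻¹ * (x ^ kl.1 * x ^ kl.2) =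
            (((n + 2).factorial : ℂ))⁻¹ * x ^ n := by
        intro kl hkl
        rw [Finset.HasAntidiagonal.mem_antidiagonal] at hkl
        rw [← pow_add, hkl]
      rw [Finset.sum_congr rfl inner, Finset.sum_const, Finset.Nat.card_antidiagonal,
        nsmul_eq_mul]
      push_cast; ring
    have key : ∀ n : ℕ, ((n : ℂ) + 1) * ((((n + 2).factorial : ℂ))⁻¹ * x ^ n) =
        (((n + 1).factorial : ℂ))⁻¹ * x ^ n - (((n + 2).factorial : ℂ))⁻¹ * x ^ n := by
      intro n
      have hf : ((n + 2).factorial : ℂ) = ((n : ℂ) + 2) * ((n + 1).factorial : ℂ) := by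
        rw [show n + 2 = (n + 1) + 1 from rfl, Nat.factorial_succ]
        push_cast; ring
      have h1' : ((n + 1).factorial : ℂ) ≠ 0 := Nat.cast_ne_zero.mpr (n + 1).factorial_ne_zero
      have h2' : ((n + 2).factorial : ℂ) ≠ 0 := Nat.cast_ne_zero.mpr (n + 2).factorial_ne_zero
      have hn2 : ((n : ℂ) + 2) ≠ 0 := by
        have h : ((n + 2 : ℕ) : ℂ) ≠ 0 := Nat.cast_ne_zero.mpr (by omega)
        push_cast at h; exact h
      rw [hf]
      field_simp
      ring
    rw [hP, tsum_congr key, Summable.tsum_sub (summable_shift x 1) (summable_shift x 2), ← hS1, ← hS2,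
      eq_div_iff (pow_ne_zero 2 hx)]
    linear_combination (1 - x) * h1 + x * h2
  · have hP : P2 0 x = S2 := by
      unfold P2
      simp only [zero_add]
      rw [tsum_prod_eq _ (summableP 0 x), hS2]
      refine tsum_congr fun n => ?_
      rw [Finset.sum_eq_single (0, n)]
      · simp
      · rintro ⟨a, b⟩ hab hne
        rw [Finset.HasAntidiagonal.mem_antidiagonal] at hab
        have ha : a ≠ 0 := by rintro rfl; simp at hab; subst hab; exact hne rfl
        simp [zero_pow ha]
      · intro h
        exact absurd (Finset.HasAntidiagonal.mem_antidiagonal.mpr (by omega)) h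
    rw [hP, eq_div_iff (pow_ne_zero 2 hx)]
    linear_combination -h1 - x * h2
end
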